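/- Small gain lemma with uniqueness: if behaviors R and S have Cauchy gains γ₁, γ₂ and incremental limit gains κ₁, κ₂, with γ₁∘γ₂ < id and κ₁∘κ₂ < id on (0,∞), then there exist fixed points ū ∈ U and ȳ ∈ Y such that every (ω,η) with (ω,η) ∈ R, (η,ω) ∈ S, and ‖ω‖_aa < ∞ satisfies lim ω = ū and lim η = ȳ, provided at least one such pair exists. -/

import Mathlib

open Filter
open scoped NNReal ENNReal

/-- Asymptotic amplitude of a signal `ω : ℝ≥0 → M`:
`‖ω‖_aa = lim_{T→∞} sup_{t,s ≥ T} dist (ω t) (ω s)`. -/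
noncomputable def asympAmp {M : Type*} [PseudoMetricSpace M] (ω : ℝ≥0 → M) : ℝ≥0∞ :=
  Filter.limsup (fun p : ℝ≥0 × ℝ≥0 => edist (ω p.1) (ω p.2)) (atTop ×ˢ atTop)

/-- A behavior with input-value space `U` and output-value space `Y`: a relation between
`U`-valued and `Y`-valued signals. -/
abbrev Behavior (U Y : Type*) := Set ((ℝ≥0 → U) × (ℝ≥0 → Y))

/-- Class `K∞` functions: continuous, strictly increasing, unbounded, vanishing at `0`. -/
def KInfty (γ : ℝ≥0 → ℝ≥0) : Prop :=
  Continuous γ ∧ StrictMono γ ∧ γ 0 = 0 ∧ Tendsto γ atTop atTop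

/-- Extension of a gain function to `[0,∞]`, sending `∞` to `∞`. -/
noncomputable def extGain (γ : ℝ≥0 → ℝ≥0) : ℝ≥0∞ → ℝ≥0∞ :=
  fun x => if x = ⊤ then ⊤ else (γ x.toNNReal : ℝ≥0∞)

/-- `R` has Cauchy gain `γ` : `‖η‖_aa ≤ γ (‖ω‖_aa)` for all `(ω, η) ∈ R`. -/
def HasCauchyGain {U Y : Type*} [MetricSpace U] [MetricSpace Y]
    (R : Behavior U Y) (γ : ℝ≥0 → ℝ≥0) : Prop :=
  ∀ p ∈ R, asympAmp p.2 ≤ extGain γ (asympAmp p.1)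

/-- `R` has incremental limit gain `κ` : whenever both inputs converge,
`limsup_{t→∞} dist (η₁ t) (η₂ t) ≤ κ (dist ω₁^∞ ω₂^∞)`. -/
def HasIncrLimitGain {U Y : Type*} [MetricSpace U] [MetricSpace Y]
    (R : Behavior U Y) (κ : ℝ≥0 → ℝ≥0) : Prop :=
  ∀ p q, p ∈ R → q ∈ R → ∀ u₁ u₂ : U,
    Tendsto p.1 atTop (nhds u₁) → Tendsto q.1 atTop (nhds u₂) →
    Filter.limsup (fun t => edist (p.2 t) (q.2 t)) atTop ≤ (κ (nndist u₁ u₂) : ℝ≥0∞)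


lemma aux_fix {γ₁ γ₂ : ℝ≥0 → ℝ≥0} (h1 : StrictMono γ₁) (h10 : γ₁ 0 = 0)
    (hsg : ∀ r : ℝ≥0, 0 < r → γ₁ (γ₂ r) < r) {a : ℝ≥0} (ha : a ≤ γ₂ (γ₁ a)) : a = 0 := by
  by_contra h
  have hapos : 0 < a := pos_iff_ne_zero.mpr h
  have h1a : 0 < γ₁ a := h10 ▸ h1 hapos
  exact absurd (lt_of_le_of_lt (h1.monotone ha) (hsg _ h1a)) (lt_irrefl _)

lemma tendsto_of_asympAmp_zero {M : Type*} [MetricSpace M] [CompleteSpace M]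
    {ω : ℝ≥0 → M} (h : asympAmp ω = 0) : ∃ u, Tendsto ω atTop (nhds u) := by
  apply cauchySeq_tendsto_of_complete
  rw [EMetric.cauchySeq_iff]
  intro ε hε
  have hl : Filter.limsup (fun p : ℝ≥0 × ℝ≥0 => edist (ω p.1) (ω p.2)) (atTop ×ˢ atTop) < ε := by
    rw [asympAmp] at h; rw [h]; exact hε
  have hev := Filter.eventually_lt_of_limsup_lt hl
  rw [Filter.prod_atTop_atTop_eq] at hev
  rcases Filter.eventually_atTop.mp hev with ⟨N, hN⟩
  exact ⟨max N.1 N.2, fun m hm n hn =>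
    hN (m, n) ⟨le_trans (le_max_left _ _) hm, le_trans (le_max_right _ _) hn⟩⟩

lemma extGain_coe (γ : ℝ≥0 → ℝ≥0) (x : ℝ≥0) : extGain γ (x : ℝ≥0∞) = (γ x : ℝ≥0∞) := by
  simp [extGain]

/-- Small gain lemma for asymptotic amplitude, with uniqueness of the limits. -/
theorem stmt3 {U Y : Type*} [MetricSpace U] [MetricSpace Y]
    [CompleteSpace U] [CompleteSpace Y]
    (R : Behavior U Y) (S : Behavior Y U) (γ₁ γ₂ κ₁ κ₂ : ℝ≥0 → ℝ≥0)
    (hγ₁ : KInfty γ₁) (hγ₂ : KInfty γ₂) (hκ₁ : KInfty κ₁) (hκ₂ : KInfty κ₂)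
    (hR : HasCauchyGain R γ₁) (hS : HasCauchyGain S γ₂)
    (hRi : HasIncrLimitGain R κ₁) (hSi : HasIncrLimitGain S κ₂)
    (hsg : ∀ r : ℝ≥0, 0 < r → γ₁ (γ₂ r) < r)
    (hsg' : ∀ r : ℝ≥0, 0 < r → κ₁ (κ₂ r) < r)
    (hne : ∃ (ω : ℝ≥0 → U) (η : ℝ≥0 → Y),
      (ω, η) ∈ R ∧ (η, ω) ∈ S ∧ asympAmp ω ≠ ⊤) :
    ∃ (ubar : U) (ybar : Y), ∀ (ω : ℝ≥0 → U) (η : ℝ≥0 → Y),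
      (ω, η) ∈ R → (η, ω) ∈ S → asympAmp ω ≠ ⊤ →
      Tendsto ω atTop (nhds ubar) ∧ Tendsto η atTop (nhds ybar) := by
  have key : ∀ (ω : ℝ≥0 → U) (η : ℝ≥0 → Y), (ω, η) ∈ R → (η, ω) ∈ S → asympAmp ω ≠ ⊤ →
      ∃ u y, Tendsto ω atTop (nhds u) ∧ Tendsto η atTop (nhds y) := by
    intro ω η hR' hS' hfin
    have h1 : asympAmp η ≤ extGain γ₁ (asympAmp ω) := hR (ω, η) hR'
    have h2 : asympAmp ω ≤ extGain γ₂ (asympAmp η) := hS (η, ω) hS'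
    have hωc : asympAmp ω = ((asympAmp ω).toNNReal : ℝ≥0∞) := (ENNReal.coe_toNNReal hfin).symm
    have hηfin : asympAmp η ≠ ⊤ := by
      intro hh
      rw [hh, hωc, extGain_coe] at h1
      exact (ENNReal.coe_ne_top : ((γ₁ (asympAmp ω).toNNReal : ℝ≥0) : ℝ≥0∞) ≠ ⊤)
        (top_le_iff.mp h1)
    have hηc : asympAmp η = ((asympAmp η).toNNReal : ℝ≥0∞) := (ENNReal.coe_toNNReal hηfin).symm
    set a := (asympAmp ω).toNNReal
    set b := (asympAmp η).toNNReal
    rw [hωc, hηc, extGain_coe] at h1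
    rw [hωc, hηc, extGain_coe] at h2
    have h1' : b ≤ γ₁ a := by exact_mod_cast h1
    have h2' : a ≤ γ₂ b := by exact_mod_cast h2
    have ha : a = 0 :=
      aux_fix hγ₁.2.1 hγ₁.2.2.1 hsg (le_trans h2' (hγ₂.2.1.monotone h1'))
    have hb : b = 0 := by
      refine le_antisymm ?_ zero_le
      calc b ≤ γ₁ a := h1'
        _ = 0 := by rw [ha, hγ₁.2.2.1]
    have hω0 : asympAmp ω = 0 := by rw [hωc, ha]; rfl
    have hη0 : asympAmp η = 0 := by rw [hηc, hb]; rfl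
    obtain ⟨u, hu⟩ := tendsto_of_asympAmp_zero hω0
    obtain ⟨y, hy⟩ := tendsto_of_asympAmp_zero hη0
    exact ⟨u, y, hu, hy⟩
  obtain ⟨ω₀, η₀, hR0, hS0, hfin0⟩ := hne
  obtain ⟨u₀, y₀, hu₀, hy₀⟩ := key ω₀ η₀ hR0 hS0 hfin0
  refine ⟨u₀, y₀, fun ω η h1 h2 h3 => ?_⟩
  obtain ⟨u, y, hu, hy⟩ := key ω η h1 h2 h3
  have hlimy : Filter.limsup (fun t => edist (η t) (η₀ t)) atTop = edist y y₀ :=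
    (hy.edist hy₀).limsup_eq
  have hlimu : Filter.limsup (fun t => edist (ω t) (ω₀ t)) atTop = edist u u₀ :=
    (hu.edist hu₀).limsup_eq
  have hy' : nndist y y₀ ≤ κ₁ (nndist u u₀) := by
    have := hRi (ω, η) (ω₀, η₀) h1 hR0 u u₀ hu hu₀
    rw [hlimy, edist_nndist] at this
    exact_mod_cast this
  have hu' : nndist u u₀ ≤ κ₂ (nndist y y₀) := by
    have := hSi (η, ω) (η₀, ω₀) h2 hS0 y y₀ hy hy₀
    rw [hlimu, edist_nndist] at this
    exact_mod_cast this
  have hdu : nndist u u₀ = 0 :=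
    aux_fix hκ₁.2.1 hκ₁.2.2.1 hsg' (le_trans hu' (hκ₂.2.1.monotone hy'))
  have hdy : nndist y y₀ = 0 := by
    refine le_antisymm ?_ zero_le
    calc nndist y y₀ ≤ κ₁ (nndist u u₀) := hy'
      _ = 0 := by rw [hdu, hκ₁.2.2.1]
  have heu : u = u₀ := by
    exact eq_of_nndist_eq_zero hdu
  have hey : y = y₀ := by
    exact eq_of_nndist_eq_zero hdy
  exact ⟨heu ▸ hu, hey ▸ hy⟩
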